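/- Every connected claw-free graph of order at least six admits a rigid orientation; that is, OD'^-(G) = 1. -/

import Mathlib

/-- An orientation of a simple graph `G`: a choice of exactly one direction for each edge. -/
structure GraphOrientation {V : Type*} (G : SimpleGraph V) where
  A : V → V → Prop
  consistent : ∀ u v, G.Adj u v ↔ A u v ∨ A v u
  asymm : ∀ u v, A u v → ¬ A v u

/-- `φ` is an automorphism of the graph `G`. -/
def IsGraphAut {V : Type*} (G : SimpleGraph V) (φ : Equiv.Perm V) : Prop :=
  ∀ u v, G.Adj (φ u) (φ v) ↔ G.Adj u v

/-- `φ` is an automorphism of the digraph with arc relation `A`. -/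
def IsDigraphAut {V : Type*} (A : V → V → Prop) (φ : Equiv.Perm V) : Prop :=
  ∀ u v, A (φ u) (φ v) ↔ A u v

/-- An edge colouring `c` of `G` is distinguishing if the only automorphism
preserving it is the identity. -/
def IsDistEdgeCol {V : Type*} (G : SimpleGraph V) {C : Type*} (c : Sym2 V → C) : Prop :=
  ∀ φ : Equiv.Perm V, IsGraphAut G φ →
    (∀ e ∈ G.edgeSet, c (Sym2.map φ e) = c e) → φ = 1

/-- The distinguishing index `D'(G)` of a graph. -/
noncomputable def D' {V : Type*} (G : SimpleGraph V) : ℕ :=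
  sInf {k | ∃ c : Sym2 V → Fin k, IsDistEdgeCol G c}

/-- An arc colouring `c` of the digraph with arc relation `A` is distinguishing if
the only automorphism preserving it is the identity. -/
def IsDistArcCol {V : Type*} (A : V → V → Prop) {C : Type*} (c : V → V → C) : Prop :=
  ∀ φ : Equiv.Perm V, IsDigraphAut A φ →
    (∀ u v, A u v → c (φ u) (φ v) = c u v) → φ = 1

/-- The distinguishing index of a digraph with arc relation `A`. -/
noncomputable def Dd' {V : Type*} (A : V → V → Prop) : ℕ :=
  sInf {k | ∃ c : V → V → Fin k, IsDistArcCol A c}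

/-- `OD'⁻(G)`: minimum of the distinguishing index over all orientations of `G`. -/
noncomputable def ODminus {V : Type*} (G : SimpleGraph V) : ℕ :=
  sInf {n | ∃ O : GraphOrientation G, Dd' O.A = n}

/-- `OD'⁺(G)`: maximum of the distinguishing index over all orientations of `G`. -/
noncomputable def ODplus {V : Type*} (G : SimpleGraph V) : ℕ :=
  sSup {n | ∃ O : GraphOrientation G, Dd' O.A = n}

/-- `G` is claw-free: no induced `K_{1,3}`. -/
def ClawFree {V : Type*} (G : SimpleGraph V) : Prop :=
  ∀ x a b c : V, G.Adj x a → G.Adj x b → G.Adj x c →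
    a ≠ b → a ≠ c → b ≠ c → (G.Adj a b ∨ G.Adj a c ∨ G.Adj b c)

/-- `G` is traceable: it has a Hamiltonian path. -/
def Traceable {V : Type*} [DecidableEq V] (G : SimpleGraph V) : Prop :=
  ∃ (u v : V) (p : G.Walk u v), p.IsHamiltonian

/-- `H` is empty or has a Hamiltonian path (i.e. admits a path cover by one path). -/
def TraceableOrEmpty {W : Type*} [DecidableEq W] (H : SimpleGraph W) : Prop :=
  IsEmpty W ∨ ∃ (u v : W) (p : H.Walk u v), p.IsHamiltonian

/-- `φ` is a twisted automorphism: some power of `φ` swaps the ends of an edge. -/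
def Twisted {V : Type*} (G : SimpleGraph V) (φ : Equiv.Perm V) : Prop :=
  ∃ (n : ℕ) (u v : V), 1 ≤ n ∧ G.Adj u v ∧ (φ ^ n) u = v ∧ (φ ^ n) v = u

/-- `H` has no cut-vertex. -/
def NoCutVtx {W : Type*} (H : SimpleGraph W) : Prop :=
  ∀ v : W, (H.induce {u | u ≠ v}).Preconnected


/-! ### Auxiliary machinery -/

open SimpleGraph
set_option linter.unusedSectionVars false

section AuxMachinery

variable {V : Type*}



/-- reachability within a set `s` -/
def RIn (G : SimpleGraph V) (s : Set V) (a b : V) : Prop :=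
  ∃ w : G.Walk a b, ∀ x ∈ w.support, x ∈ s

/-- preconnectivity within a set -/
def PreC (G : SimpleGraph V) (s : Set V) : Prop :=
  ∀ a ∈ s, ∀ b ∈ s, RIn G s a b

namespace RIn

variable {G : SimpleGraph V} {s : Set V} {a b c : V}

lemma refl (ha : a ∈ s) : RIn G s a a := ⟨Walk.nil, by simp [ha]⟩

lemma symm (h : RIn G s a b) : RIn G s b a := by
  obtain ⟨w, hw⟩ := h
  exact ⟨w.reverse, by simpa using hw⟩

lemma trans (h1 : RIn G s a b) (h2 : RIn G s b c) : RIn G s a c := by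
  obtain ⟨w1, hw1⟩ := h1
  obtain ⟨w2, hw2⟩ := h2
  refine ⟨w1.append w2, ?_⟩
  intro x hx
  rw [Walk.support_append, List.mem_append] at hx
  rcases hx with hx | hx
  · exact hw1 x hx
  · exact hw2 x (List.mem_of_mem_tail hx)

lemma cons (hadj : G.Adj a b) (ha : a ∈ s) (h : RIn G s b c) : RIn G s a c := by
  obtain ⟨w, hw⟩ := h
  refine ⟨Walk.cons hadj w, ?_⟩
  intro x hx
  rw [Walk.support_cons, List.mem_cons] at hx
  rcases hx with rfl | hx
  · exact ha
  · exact hw x hx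

lemma step (h : RIn G s a b) (hadj : G.Adj b c) (hc : c ∈ s) : RIn G s a c :=
  h.trans (RIn.cons hadj (by obtain ⟨w, hw⟩ := h; exact hw b (by simp)) (RIn.refl hc))

lemma mem_right (h : RIn G s a b) : b ∈ s := by
  obtain ⟨w, hw⟩ := h; exact hw b (by simp)

lemma mem_left (h : RIn G s a b) : a ∈ s := by
  obtain ⟨w, hw⟩ := h; exact hw a (by simp)

end RIn

section NC
variable {G : SimpleGraph V} [Fintype V] [DecidableEq V]

/-- convert an `RIn` walk to a walk in the induced subgraph -/
lemma reachable_induce_of_rin {s : Finset V} {a b : V} (ha : a ∈ s) (hb : b ∈ s)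
    (h : RIn G (↑s) a b) :
    (G.induce (↑s : Set V)).Reachable ⟨a, ha⟩ ⟨b, hb⟩ := by
  obtain ⟨w, hw⟩ := h
  revert ha hb hw
  induction w with
  | nil => intro ha hb hw; exact Reachable.refl _
  | @cons u x v h p ih =>
    intro ha hb hw
    have hx : x ∈ s := by
      apply hw; rw [Walk.support_cons]; exact List.mem_cons_of_mem _ p.start_mem_support
    have h1 : (G.induce (↑s : Set V)).Adj ⟨u, ha⟩ ⟨x, hx⟩ := h
    exact (h1.reachable).trans (ih hx hb (fun y hy => hw y (by rw [Walk.support_cons]; exact List.mem_cons_of_mem _ hy)))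

lemma rin_of_induce_walk {s : Finset V} {t : Set V} : ∀ {x y : ↥(↑s : Set V)}
    (p : (G.induce (↑s : Set V)).Walk x y), (∀ v ∈ p.support, (v : V) ∈ t) →
    RIn G t (x : V) (y : V) := by
  intro x y p
  induction p with
  | nil => intro hsup; exact ⟨Walk.nil, by simpa using hsup _ (by simp)⟩
  | @cons u a v h p ih =>
    intro hsup
    have hadj : G.Adj (u : V) (a : V) := h
    obtain ⟨w, hw⟩ := ih (fun v hv => hsup v (by rw [Walk.support_cons]; exact List.mem_cons_of_mem _ hv))
    refine ⟨Walk.cons hadj w, ?_⟩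
    intro z hz
    rw [Walk.support_cons, List.mem_cons] at hz
    rcases hz with rfl | hz
    · exact hsup u (by simp)
    · exact hw z hz

/-- every preconnected nonempty finset has a non-cut vertex -/
lemma exists_noncut {s : Finset V} (hne : s.Nonempty) (hc : PreC G ↑s) :
    ∃ w ∈ s, PreC G (↑s \ {w}) := by
  classical
  obtain ⟨a0, ha0⟩ := hne
  set H := G.induce (↑s : Set V) with hH
  set A0 : ↥(↑s : Set V) := ⟨a0, ha0⟩ with hA0
  have hHconn : H.Preconnected := by
    intro x y
    exact reachable_induce_of_rin x.2 y.2 (hc x x.2 y y.2)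
  obtain ⟨w, -, hmax⟩ := Finset.exists_max_image (Finset.univ : Finset ↥(↑s : Set V))
    (fun b => H.dist A0 b) ⟨A0, Finset.mem_univ _⟩
  refine ⟨(w : V), w.2, ?_⟩
  -- for every b ≠ w, there is a walk from A0 to b avoiding w
  have key : ∀ b : ↥(↑s : Set V), b ≠ w → RIn G (↑s \ {(w : V)}) a0 (b : V) := by
    intro b hbw
    obtain ⟨p, hp⟩ := (hHconn A0 b).exists_walk_length_eq_dist
    have hwsup : w ∉ p.support := by
      intro hmem
      have h1 : H.dist A0 w ≤ (p.takeUntil w hmem).length := dist_le _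
      have h2 : H.dist w b ≤ (p.dropUntil w hmem).length := dist_le _
      have h3 : (p.takeUntil w hmem).length + (p.dropUntil w hmem).length = p.length := by
        rw [← Walk.length_append, Walk.take_spec]
      have h4 : H.dist A0 b ≤ H.dist A0 w := hmax b (Finset.mem_univ _)
      have h5 : H.dist w b = 0 := by omega
      have h6 : w = b := ((hHconn w b).dist_eq_zero_iff).mp h5
      exact hbw h6.symm
    -- convert p to an RIn walk avoiding w
    have : ∀ v ∈ p.support, (v : V) ∈ (↑s \ {(w : V)} : Set V) := by
      intro v hv
      refine ⟨v.2, ?_⟩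
      simp only [Set.mem_singleton_iff]
      intro hvw
      exact hwsup (by rwa [show v = w from Subtype.ext hvw] at hv)
    exact rin_of_induce_walk p this
  intro x hx y hy
  have hxs : x ∈ s := hx.1
  have hys : y ∈ s := hy.1
  have hxw : (⟨x, hxs⟩ : ↥(↑s : Set V)) ≠ w := by
    intro h; exact hx.2 (by rw [Set.mem_singleton_iff, ← h])
  have hyw : (⟨y, hys⟩ : ↥(↑s : Set V)) ≠ w := by
    intro h; exact hy.2 (by rw [Set.mem_singleton_iff, ← h])
  have h1 := key ⟨x, hxs⟩ hxw
  have h2 := key ⟨y, hys⟩ hyw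
  obtain ⟨w1, hw1⟩ := h1
  obtain ⟨w2, hw2⟩ := h2
  refine ⟨(w1.reverse).append w2, ?_⟩
  intro z hz
  rw [Walk.support_append, List.mem_append] at hz
  rcases hz with hz | hz
  · exact hw1 z (by simpa using hz)
  · exact hw2 z (List.mem_of_mem_tail hz)

end NC

/-- crossing lemma: walking from (R ∪ {y0}) out to outside, one finds a neighbour of y0
outside R. -/
lemma cross_lemma {G : SimpleGraph V} {S : Set V} {R : Set V} {y0 : V}
    (hclosed : ∀ a b, a ∈ R → G.Adj a b → b ∈ S → b ≠ y0 → b ∈ R) :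
    ∀ (N : ℕ) {x c : V} (w : G.Walk x c), w.length ≤ N → (∀ v ∈ w.support, v ∈ S) →
    (x ∈ R ∨ x = y0) → c ∉ R → c ≠ y0 →
    ∃ c', G.Adj y0 c' ∧ c' ∈ S ∧ c' ≠ y0 ∧ c' ∉ R := by
  intro N
  induction N with
  | zero =>
    intro x c w hlen _ hx hc hcy
    have : x = c := Walk.eq_of_length_eq_zero (Nat.le_zero.mp hlen)
    subst this
    rcases hx with h | h
    · exact absurd h hc
    · exact absurd h hcy
  | succ N ih =>
    intro x c w hlen hsup hx hc hcy
    cases w with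
    | nil =>
      rcases hx with h | h
      · exact absurd h hc
      · exact absurd h hcy
    | @cons x x1 c hadj p =>
      have hx1S : x1 ∈ S := by
        apply hsup; rw [Walk.support_cons]; exact List.mem_cons_of_mem _ p.start_mem_support
      have hsup' : ∀ v ∈ p.support, v ∈ S := fun v hv => hsup v
        (by rw [Walk.support_cons]; exact List.mem_cons_of_mem _ hv)
      have hlen' : p.length ≤ N := by
        have := Walk.length_cons hadj p; omega
      rcases hx with hxR | hxy0
      · by_cases h1 : x1 = y0
        · exact ih p hlen' hsup' (Or.inr h1) hc hcy
        · exact ih p hlen' hsup' (Or.inl (hclosed x x1 hxR hadj hx1S h1)) hc hcy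
      · rw [hxy0] at hadj
        by_cases h1 : x1 ∈ R
        · exact ih p hlen' hsup' (Or.inl h1) hc hcy
        · by_cases h2 : x1 = y0
          · exact ih p hlen' hsup' (Or.inr h2) hc hcy
          · exact ⟨x1, hadj, hx1S, h2, h1⟩

/-- MAIN: good order exists, with a prescribed non-cut vertex last -/
lemma main_good : ∀ (n : ℕ) {V : Type*} [Fintype V] [DecidableEq V] (G : SimpleGraph V),
    ClawFree G → ∀ s : Finset V, s.card = n → PreC G ↑s → ∀ z ∈ s, PreC G (↑s \ {z}) →
    ∃ f : V → ℕ,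
      (∀ u ∈ s, ∀ w ∈ s, f u = f w → u = w) ∧
      (∀ u ∈ s, u ≠ z → f u < f z) ∧
      (∀ u ∈ s, ∀ w ∈ s, ¬G.Adj u w → u ≠ w → f u < f w →
        ∃ y ∈ s, ¬((G.Adj y u ∧ f y < f u) ↔ (G.Adj y w ∧ f y < f w))) := by
  intro n
  induction n with
  | zero =>
    intro V _ _ G hcf s hcard hps z hz hpz
    exact absurd (Finset.card_eq_zero.mp hcard ▸ hz) (Finset.notMem_empty z)
  | succ n ih =>
    intro V _ _ G hcf s hcard hps z hz hpz
    by_cases hA : ∃ a ∈ s, a ≠ z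
    case neg =>
      push_neg at hA
      refine ⟨fun _ => 0, ?_, ?_, ?_⟩
      · intro u hu w hw _; rw [hA u hu, hA w hw]
      · intro u hu hune; exact absurd (hA u hu) hune
      · intro u hu w hw _ hne _; exact absurd ((hA u hu).trans (hA w hw).symm) hne
    case pos =>
    obtain ⟨a, has, haz⟩ := hA
    set s' := s.erase z with hs'
    have hcs' : s'.card = n := by
      rw [hs', Finset.card_erase_of_mem hz, hcard]
      omega
    have hcoe : (↑s' : Set V) = ↑s \ {z} := Finset.coe_erase z s
    have hps' : PreC G ↑s' := by rw [hcoe]; exact hpz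
    have hsub : ∀ x ∈ s', x ∈ s := fun x hx => Finset.mem_of_mem_erase hx
    -- a neighbour of z inside s'
    obtain ⟨y0, hy0s', hzy0⟩ : ∃ y, y ∈ s' ∧ G.Adj z y := by
      obtain ⟨w, hw⟩ := hps z hz a has
      cases w with
      | nil => exact absurd rfl haz
      | @cons z x1 a hadj p =>
        refine ⟨x1, Finset.mem_erase.mpr ⟨hadj.ne', ?_⟩, hadj⟩
        apply hw; rw [Walk.support_cons]; exact List.mem_cons_of_mem _ p.start_mem_support
    by_cases hCase : ∃ y, (y ∈ s' ∧ G.Adj z y) ∧ PreC G (↑s' \ {y})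
    · -- Case A : a non-cut neighbour y of z in s'
      obtain ⟨y, ⟨hys', hzy⟩, hpy⟩ := hCase
      obtain ⟨f, hinj, hmax, hgood⟩ := ih G hcf s' hcs' hps' y hys' hpy
      set B := (s'.sup f) + 1 with hB
      set F := fun v => if v = z then B else f v with hF
      have hFeq : ∀ u ∈ s', F u = f u := by
        intro u hu; simp only [hF]; rw [if_neg (Finset.ne_of_mem_erase hu)]
      have hFz : F z = B := by simp [hF]
      have hFlt : ∀ u ∈ s', F u < F z := by
        intro u hu; rw [hFeq u hu, hFz, hB]
        exact Nat.lt_succ_of_le (Finset.le_sup hu)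
      refine ⟨F, ?_, ?_, ?_⟩
      · intro u hu w hw hFuw
        by_cases huz : u = z <;> by_cases hwz : w = z
        · rw [huz, hwz]
        · have := hFlt w (Finset.mem_erase.mpr ⟨hwz, hw⟩); rw [← huz] at this; omega
        · have := hFlt u (Finset.mem_erase.mpr ⟨huz, hu⟩); rw [← hwz] at this; omega
        · have hu' := Finset.mem_erase.mpr ⟨huz, hu⟩
          have hw' := Finset.mem_erase.mpr ⟨hwz, hw⟩
          exact hinj u hu' w hw' (by rwa [hFeq u hu', hFeq w hw'] at hFuw)
      · intro u hu hune; exact hFlt u (Finset.mem_erase.mpr ⟨hune, hu⟩)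
      · intro u hu w hw hnadj hne hlt
        by_cases hwz : w = z
        · subst hwz
          have hu' : u ∈ s' := Finset.mem_erase.mpr ⟨hne, hu⟩
          refine ⟨y, hsub y hys', ?_⟩
          intro hiff
          have hL := hiff.mpr ⟨hzy.symm, hFlt y hys'⟩
          have huy : u ≠ y := by rintro rfl; exact G.loopless.irrefl u hL.1
          have h2 := hmax u hu' huy
          rw [hFeq u hu', hFeq y hys'] at hL
          omega
        · by_cases huz : u = z
          · subst huz
            have := hFlt w (Finset.mem_erase.mpr ⟨hwz, hw⟩); omega
          · have hu' := Finset.mem_erase.mpr ⟨huz, hu⟩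
            have hw' := Finset.mem_erase.mpr ⟨hwz, hw⟩
            obtain ⟨y1, hy1, hiff⟩ := hgood u hu' w hw' hnadj hne
              (by rwa [hFeq u hu', hFeq w hw'] at hlt)
            refine ⟨y1, hsub y1 hy1, ?_⟩
            rwa [hFeq y1 hy1, hFeq u hu', hFeq w hw']
    · -- Case B : all neighbours of z in s' are cut vertices of s'
      push_neg at hCase
      have hs'ne : s'.Nonempty := ⟨a, Finset.mem_erase.mpr ⟨haz, has⟩⟩
      obtain ⟨wstar, hwstar, hpwstar⟩ := exists_noncut hs'ne hps'
      obtain ⟨f, hinj, hmax, hgood⟩ := ih G hcf s' hcs' hps' wstar hwstar hpwstar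
      set B := (s'.sup f) + 1 with hB
      set F := fun v => if v = z then B else f v with hF
      have hFeq : ∀ u ∈ s', F u = f u := by
        intro u hu; simp only [hF]; rw [if_neg (Finset.ne_of_mem_erase hu)]
      have hFz : F z = B := by simp [hF]
      have hFlt : ∀ u ∈ s', F u < F z := by
        intro u hu; rw [hFeq u hu, hFz, hB]
        exact Nat.lt_succ_of_le (Finset.le_sup hu)
      refine ⟨F, ?_, ?_, ?_⟩
      · intro u hu w hw hFuw
        by_cases huz : u = z <;> by_cases hwz : w = z
        · rw [huz, hwz]
        · have := hFlt w (Finset.mem_erase.mpr ⟨hwz, hw⟩); rw [← huz] at this; omega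
        · have := hFlt u (Finset.mem_erase.mpr ⟨huz, hu⟩); rw [← hwz] at this; omega
        · have hu' := Finset.mem_erase.mpr ⟨huz, hu⟩
          have hw' := Finset.mem_erase.mpr ⟨hwz, hw⟩
          exact hinj u hu' w hw' (by rwa [hFeq u hu', hFeq w hw'] at hFuw)
      · intro u hu hune; exact hFlt u (Finset.mem_erase.mpr ⟨hune, hu⟩)
      · intro u hu w hw hnadj hne hlt
        by_cases hwz : w = z
        · -- the hard case: u below z, nonadjacent; suppose same downsets
          subst hwz
          have hu' : u ∈ s' := Finset.mem_erase.mpr ⟨hne, hu⟩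
          by_contra hno
          push_neg at hno
          -- hno : ∀ y ∈ s, iff
          have hdang : ∀ y ∈ s', G.Adj y w → G.Adj y u ∧ f y < f u := by
            intro y hy hyz
            have := (hno y (hsub y hy)).mpr ⟨hyz, hFlt y hy⟩
            rwa [hFeq y hy, hFeq u hu'] at this
          have hy0u : G.Adj y0 u := (hdang y0 hy0s' hzy0.symm).1
          have huy0 : u ≠ y0 := fun h => G.loopless.irrefl u (h ▸ hy0u)
          set T : Set V := ↑s' \ {y0} with hT
          set R : Set V := {x | x ∈ (↑s' : Set V) ∧ x ≠ y0 ∧ RIn G T u x} with hR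
          have huR : u ∈ R := ⟨hu', huy0, RIn.refl ⟨hu', huy0⟩⟩
          have hclosed : ∀ p q : V, p ∈ R → G.Adj p q → q ∈ (↑s' : Set V) → q ≠ y0 → q ∈ R :=
            fun p q hpR hpq hq hqy0 => ⟨hq, hqy0, hpR.2.2.step hpq ⟨hq, hqy0⟩⟩
          have hnc : ¬ PreC G T := hCase y0 ⟨hy0s', hzy0⟩
          obtain ⟨c, hcs', hcy0, hcR⟩ : ∃ c, c ∈ (↑s' : Set V) ∧ c ≠ y0 ∧ c ∉ R := by
            by_contra hAll
            push_neg at hAll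
            apply hnc
            intro p hp q hq
            have hpR : p ∈ R := hAll p hp.1 hp.2
            have hqR : q ∈ R := hAll q hq.1 hq.2
            exact (hpR.2.2.symm).trans hqR.2.2
          obtain ⟨wk, hwk⟩ := hps' u hu' c hcs'
          obtain ⟨c', hy0c', hc's', hc'y0, hc'R⟩ :=
            cross_lemma hclosed wk.length wk le_rfl hwk (Or.inl huR) hcR hcy0
          have hzu : ¬ G.Adj w u := fun h => hnadj h.symm
          have hzne_u : w ≠ u := fun h => hne h.symm
          have hzne_c' : w ≠ c' := by
            intro h; rw [← h] at hc's'
            exact Finset.ne_of_mem_erase (Finset.mem_coe.mp hc's') rfl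
          have hune_c' : u ≠ c' := fun h => hc'R (h ▸ huR)
          rcases hcf y0 w u c' hzy0.symm hy0u hy0c' hzne_u hzne_c' hune_c' with h | h | h
          · exact hzu h
          · have : G.Adj c' u := (hdang c' hc's' h.symm).1
            exact hc'R (hclosed u c' huR this.symm hc's' hc'y0)
          · exact hc'R (hclosed u c' huR h hc's' hc'y0)
        · by_cases huz : u = z
          · subst huz
            have := hFlt w (Finset.mem_erase.mpr ⟨hwz, hw⟩); omega
          · have hu' := Finset.mem_erase.mpr ⟨huz, hu⟩
            have hw' := Finset.mem_erase.mpr ⟨hwz, hw⟩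
            obtain ⟨y1, hy1, hiff⟩ := hgood u hu' w hw' hnadj hne
              (by rwa [hFeq u hu', hFeq w hw'] at hlt)
            refine ⟨y1, hsub y1 hy1, ?_⟩
            rwa [hFeq y1 hy1, hFeq u hu', hFeq w hw']

/-- rigidity of the forward orientation of a good order -/
lemma rigid_of_good {V : Type*} (G : SimpleGraph V) (f : V → ℕ)
    (hinj : Function.Injective f)
    (hgood : ∀ u w, ¬G.Adj u w → u ≠ w → f u < f w →
      ∃ y, ¬((G.Adj y u ∧ f y < f u) ↔ (G.Adj y w ∧ f y < f w)))
    (φ : Equiv.Perm V)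
    (hφ : ∀ u v, (G.Adj (φ u) (φ v) ∧ f (φ u) < f (φ v)) ↔ (G.Adj u v ∧ f u < f v)) :
    φ = 1 := by
  have key : ∀ N v, f v = N → φ v = v := by
    intro N
    induction N using Nat.strong_induction_on with
    | _ N ihN =>
    intro v hfv
    by_contra hvne
    have hIH : ∀ w, f w < f v → φ w = w := fun w hw => ihN (f w) (hfv ▸ hw) w rfl
    have h1 : f v < f (φ v) := by
      rcases lt_trichotomy (f (φ v)) (f v) with h | h | h
      · exact absurd (φ.injective (hIH (φ v) h)) hvne
      · exact absurd (hinj h) hvne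
      · exact h
    set k := φ.symm v with hk
    have hφk : φ k = v := φ.apply_symm_apply v
    have hkne : k ≠ v := by
      intro h; rw [h] at hφk; exact hvne hφk
    have h2 : f v < f k := by
      rcases lt_trichotomy (f k) (f v) with h | h | h
      · have h3 := hIH k h
        rw [hφk] at h3; exact (hkne h3.symm).elim
      · exact absurd (hinj h) (fun hh => hkne hh)
      · exact h
    have hiff : ∀ y, (G.Adj y v ∧ f y < f v) ↔ (G.Adj y k ∧ f y < f k) := by
      intro y
      constructor
      · rintro ⟨hadj, hlt⟩
        have hy : φ y = y := hIH y hlt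
        exact (hφ y k).mp (by rw [hy, hφk]; exact ⟨hadj, hlt⟩)
      · rintro ⟨hadj, hlt⟩
        have h5 := (hφ y k).mpr ⟨hadj, hlt⟩
        rw [hφk] at h5
        have h7 : φ y = y := φ.injective (hIH (φ y) h5.2)
        rw [h7] at h5; exact h5
    have hnadj : ¬ G.Adj v k := by
      intro hadj
      exact G.loopless.irrefl v ((hiff v).mpr ⟨hadj, h2⟩).1
    obtain ⟨y, hy⟩ := hgood v k hnadj (Ne.symm hkne) h2
    exact hy (hiff y)
  apply Equiv.ext
  intro v
  exact key (f v) v rfl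

/-- from a rigid orientation, everything follows -/
lemma final_assembly {V : Type*} [Fintype V] (G : SimpleGraph V)
    (hconn : G.Connected) (hcard : 2 ≤ Fintype.card V)
    (O : GraphOrientation G) (hrigid : ∀ φ : Equiv.Perm V, IsDigraphAut O.A φ → φ = 1) :
    (∃ O' : GraphOrientation G, ∀ φ : Equiv.Perm V, IsDigraphAut O'.A φ → φ = 1) ∧
      ODminus G = 1 := by
  classical
  have hne : Nonempty V := Fintype.card_pos_iff.mp (by omega)
  obtain ⟨v0⟩ := hne
  -- every vertex has a neighbour
  have hading : ∀ v : V, ∃ w, G.Adj v w := by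
    intro v
    obtain ⟨u, hu⟩ := Fintype.exists_ne_of_one_lt_card (by omega) v
    obtain ⟨p⟩ := hconn v u
    cases p with
    | nil => exact absurd rfl (Ne.symm hu)
    | cons h p => exact ⟨_, h⟩
  -- every orientation has distinguishing index at least 1
  have hDd1 : ∀ O' : GraphOrientation G, 1 ≤ Dd' O'.A := by
    intro O'
    have hnonempty : {k | ∃ c : V → V → Fin k, IsDistArcCol O'.A c}.Nonempty := by
      set e := Fintype.equivFin (V × V) with he
      refine ⟨Fintype.card (V × V), fun u v => e (u, v), ?_⟩
      intro φ hφ hc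
      apply Equiv.ext
      intro v
      obtain ⟨w, hw⟩ := hading v
      rcases (O'.consistent v w).mp hw with hA | hA
      · have := hc v w hA
        have h2 : ((φ v, φ w) : V × V) = (v, w) := e.injective this
        simpa using congrArg Prod.fst h2
      · have := hc w v hA
        have h2 : ((φ w, φ v) : V × V) = (w, v) := e.injective this
        simpa using congrArg Prod.snd h2
    have h0 : (0 : ℕ) ∉ {k | ∃ c : V → V → Fin k, IsDistArcCol O'.A c} := by
      rintro ⟨c, -⟩
      exact (c v0 v0).elim0
    have := Nat.sInf_mem hnonempty
    rcases Nat.eq_zero_or_pos (Dd' O'.A) with h | h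
    · exact absurd (h ▸ this) h0
    · exact h
  have hDdO : Dd' O.A = 1 := by
    have h1 : (1 : ℕ) ∈ {k | ∃ c : V → V → Fin k, IsDistArcCol O.A c} :=
      ⟨fun _ _ => 0, fun φ hφ _ => hrigid φ hφ⟩
    have hle : Dd' O.A ≤ 1 := Nat.sInf_le h1
    have := hDd1 O
    omega
  refine ⟨⟨O, hrigid⟩, ?_⟩
  have h1 : (1 : ℕ) ∈ {n | ∃ O' : GraphOrientation G, Dd' O'.A = n} := ⟨O, hDdO⟩
  have hle : ODminus G ≤ 1 := Nat.sInf_le h1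
  have hmem := Nat.sInf_mem (⟨1, h1⟩ : Set.Nonempty _)
  obtain ⟨O', hO'⟩ := hmem
  have hge : 1 ≤ sInf {n | ∃ O' : GraphOrientation G, Dd' O'.A = n} := hO' ▸ hDd1 O'
  exact le_antisymm hle hge

end AuxMachinery

theorem stmt15 {V : Type*} [Fintype V] (G : SimpleGraph V)
    (hconn : G.Connected) (hcf : ClawFree G) (hcard : 6 ≤ Fintype.card V) :
    (∃ O : GraphOrientation G, ∀ φ : Equiv.Perm V, IsDigraphAut O.A φ → φ = 1) ∧
      ODminus G = 1 := by
  classical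
  have hneV : Nonempty V := Fintype.card_pos_iff.mp (by omega)
  have hpre : PreC G (↑(Finset.univ : Finset V)) := by
    intro a _ b _
    obtain ⟨p⟩ := hconn a b
    exact ⟨p, fun x _ => by simp⟩
  obtain ⟨z, hz, hpz⟩ := exists_noncut Finset.univ_nonempty hpre
  obtain ⟨f, hinj, hmax, hgood⟩ :=
    main_good (Finset.univ : Finset V).card G hcf Finset.univ rfl hpre z hz hpz
  have hinj' : Function.Injective f := fun u w h =>
    hinj u (Finset.mem_univ u) w (Finset.mem_univ w) h
  refine final_assembly G hconn (by omega)
    { A := fun u v => G.Adj u v ∧ f u < f v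
      consistent := by
        intro u v
        constructor
        · intro h
          rcases lt_trichotomy (f u) (f v) with h1 | h1 | h1
          · exact Or.inl ⟨h, h1⟩
          · exact absurd (hinj' h1) h.ne
          · exact Or.inr ⟨h.symm, h1⟩
        · rintro (⟨h, -⟩ | ⟨h, -⟩)
          · exact h
          · exact h.symm
      asymm := by
        rintro u v ⟨-, h1⟩ ⟨-, h2⟩
        omega } ?_
  intro φ hφ
  refine rigid_of_good G f hinj' ?_ φ (fun u v => hφ u v)
  intro u w h1 h2 h3
  obtain ⟨y, -, hy⟩ := hgood u (Finset.mem_univ u) w (Finset.mem_univ w) h1 h2 h3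
  exact ⟨y, hy⟩
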